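/- arXiv:1702.03075 — 2 statements merged into one kernel-verified Lean document; each statement's English description precedes it below -/
import Mathlib

section
/- For every odd integer k ≥ 5 and every j ∈ {1,…,k}, there exists a Hamiltonian path in the digraph S_k from the incoming vertex i_j to the outgoing vertex o_j. -/
/-- A directed path in the digraph with edge relation `E` and vertex set `Vset`:
a nonempty list of distinct vertices of `Vset`, with consecutive vertices joined
by directed edges. -/
def IsPathOn {α : Type*} (E : α → α → Prop) (Vset : Finset α) (p : List α) : Prop :=
  p ≠ [] ∧ p.Nodup ∧ p.Chain' E ∧ ∀ x ∈ p, x ∈ Vset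

/-- A Hamiltonian path from `u` to `v` in the digraph with edge relation `E`
and vertex set `Vset`: a list of distinct vertices containing every vertex of `Vset`
(and no others), starting at `u`, ending at `v`, with consecutive vertices joined
by directed edges. -/
def IsHamPathOn {α : Type*} (E : α → α → Prop) (Vset : Finset α) (u v : α)
    (p : List α) : Prop :=
  p.Nodup ∧ p.Chain' E ∧ p.head? = some u ∧ p.getLast? = some v ∧ ∀ x, x ∈ p ↔ x ∈ Vset

/-- The single visit condition: there is no collection of two or more pairwise
vertex-disjoint directed paths, each starting at an incoming vertex and ending at an
outgoing vertex, whose union visits every vertex. -/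
def SingleVisit {α : Type*} (E : α → α → Prop) (Vset : Finset α) {k : ℕ}
    (inc out : Fin k → α) : Prop :=
  ¬ ∃ P : Finset (List α), 2 ≤ P.card ∧
      (∀ p ∈ P, IsPathOn E Vset p ∧ (∃ j, p.head? = some (inc j)) ∧
        (∃ m, p.getLast? = some (out m))) ∧
      (∀ p ∈ P, ∀ q ∈ P, p ≠ q → ∀ x, x ∈ p → x ∉ q) ∧
      (∀ x ∈ Vset, ∃ p ∈ P, x ∈ p)

/-- A `k`-in-out graph: a digraph (no loops, all edges within the vertex set) together
with `k` distinct incoming vertices and `k` distinct outgoing vertices (the two sets may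
overlap), satisfying the paired vertices condition and the single visit condition. -/
structure IsInOutGraph {α : Type*} (E : α → α → Prop) (Vset : Finset α) {k : ℕ}
    (inc out : Fin k → α) : Prop where
  no_loops : ∀ x, ¬ E x x
  edge_mem : ∀ x y, E x y → x ∈ Vset ∧ y ∈ Vset
  inc_mem : ∀ j, inc j ∈ Vset
  out_mem : ∀ j, out j ∈ Vset
  inc_inj : Function.Injective inc
  out_inj : Function.Injective out
  paired : ∀ j m, (∃ p, IsHamPathOn E Vset (inc j) (out m) p) ↔ j = m
  single_visit : SingleVisit E Vset inc out

/-- The directed edge set of the graph `S_k` for odd `k ≥ 5`. -/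
def oddEdges (k : ℕ) : Finset (ℕ × ℕ) :=
  ((Finset.Icc 1 ((k - 1) / 2)).biUnion fun i =>
      {(4*i-2, 4*i-1), (4*i-1, 4*i-2), (4*i-1, 4*i), (4*i, 4*i-1),
        (4*i, 4*i+1), (4*i+1, 4*i)}) ∪
  ((Finset.Icc 1 ((k - 3) / 2)).biUnion fun i => {(4*i-2, 4*i+5), (4*i+1, 4*i+2)}) ∪
  ({(1, 2), (2*k-4, 1), (2*k-2, 5)} : Finset (ℕ × ℕ))

/-- The `m`-th outgoing vertex `o_m` (with `1 ≤ m ≤ k`) of `S_k` for odd `k ≥ 5`: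
`o_1 = 2k-1`, `o_{k-1} = 3`, `o_k = 2k-5`, and otherwise
`o_{2j} = 4j+3` and `o_{2j+1} = 4j-3`. -/
def oddOut (k m : ℕ) : ℕ :=
  if m = 1 then 2*k - 1
  else if m = k - 1 then 3
  else if m = k then 2*k - 5
  else if Even m then 2*m + 3
  else 2*m - 5

/-- edge relation of `S_{2m+1}` -/
def oE (m x y : ℕ) : Prop := (x, y) ∈ oddEdges (2*m+1)

section edges
variable {m : ℕ} (hm : 2 ≤ m)

lemma oE_norm (x y : ℕ) : oE m x y ↔
    ((∃ a, (1 ≤ a ∧ a ≤ (2 * m + 1 - 1) / 2) ∧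
      (x = 4 * a - 2 ∧ y = 4 * a - 1 ∨
        x = 4 * a - 1 ∧ y = 4 * a - 2 ∨
          x = 4 * a - 1 ∧ y = 4 * a ∨
            x = 4 * a ∧ y = 4 * a - 1 ∨ x = 4 * a ∧ y = 4 * a + 1 ∨ x = 4 * a + 1 ∧ y = 4 * a)) ∨
      ∃ a, (1 ≤ a ∧ a ≤ (2 * m + 1 - 3) / 2) ∧
        (x = 4 * a - 2 ∧ y = 4 * a + 5 ∨ x = 4 * a + 1 ∧ y = 4 * a + 2)) ∨
    x = 1 ∧ y = 2 ∨ x = 2 * (2 * m + 1) - 4 ∧ y = 1 ∨ x = 2 * (2 * m + 1) - 2 ∧ y = 5 := by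
  simp only [oE, oddEdges, Finset.mem_union, Finset.mem_biUnion, Finset.mem_Icc,
    Finset.mem_insert, Finset.mem_singleton, Prod.mk.injEq]

include hm

lemma edge_asc (x y : ℕ) (h1 : 1 ≤ x) (h2 : x ≤ 4*m) (hy : y = x + 1) : oE m x y := by
  rw [oE_norm]
  rcases (by omega : x = 1 ∨ (x % 4 = 1 ∧ 5 ≤ x) ∨ x % 4 = 2 ∨ x % 4 = 3 ∨ x % 4 = 0) with h|h|h|h|h
  · right; left; omega
  · left; right; exact ⟨(x-1)/4, by omega, by omega⟩
  · left; left; exact ⟨(x+2)/4, by omega, by omega⟩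
  · left; left; exact ⟨(x+1)/4, by omega, by omega⟩
  · left; left; exact ⟨x/4, by omega, by omega⟩

lemma edge_desc (x y : ℕ) (h1 : 3 ≤ x) (h2 : x ≤ 4*m+1) (h4 : x % 4 ≠ 2)
    (hy : y + 1 = x) : oE m x y := by
  rw [oE_norm]
  rcases (by omega : (x % 4 = 1 ∧ 5 ≤ x) ∨ x % 4 = 3 ∨ x % 4 = 0) with h|h|h
  · left; left; exact ⟨(x-1)/4, by omega, by omega⟩
  · left; left; exact ⟨(x+1)/4, by omega, by omega⟩
  · left; left; exact ⟨x/4, by omega, by omega⟩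

lemma edge_jump (x y : ℕ) (h1 : 2 ≤ x) (h2 : x ≤ 4*m-6) (h4 : x % 4 = 2)
    (hy : y = x + 7) : oE m x y := by
  rw [oE_norm]
  left; right; exact ⟨(x+2)/4, by omega, by omega⟩

lemma edge_to1 (x y : ℕ) (hx : x = 4*m-2) (hy : y = 1) : oE m x y := by
  rw [oE_norm]; right; right; left; omega

lemma edge_to5 (x y : ℕ) (hx : x = 4*m) (hy : y = 5) : oE m x y := by
  rw [oE_norm]; right; right; right; omega

end edges

/-- Descending 4-blocks: `dB a n = [a+3,a+2,a+1,a, a+7,a+6,a+5,a+4, ...]` (`n` blocks). -/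
def dB : ℕ → ℕ → List ℕ
  | _, 0 => []
  | a, n+1 => (a+3) :: (a+2) :: (a+1) :: a :: dB (a+4) n

lemma mem_dB {x : ℕ} : ∀ {n a : ℕ}, x ∈ dB a n ↔ a ≤ x ∧ x < a + 4*n
  | 0, a => by simp [dB]
  | n+1, a => by
    simp only [dB, List.mem_cons, mem_dB (n := n) (a := a+4)]; omega

lemma nodup_dB : ∀ {n a : ℕ}, (dB a n).Nodup
  | 0, _ => by simp [dB]
  | n+1, a => by
    simp only [dB, List.nodup_cons, List.mem_cons, mem_dB, nodup_dB (n := n) (a := a+4),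
      and_true]; omega

lemma dB_ne_nil {n a : ℕ} (h : 1 ≤ n) : dB a n ≠ [] := by
  cases n with
  | zero => omega
  | succ n => simp [dB]

lemma head?_dB_append {n a : ℕ} (l : List ℕ) (h : 1 ≤ n) :
    (dB a n ++ l).head? = some (a+3) := by
  cases n with
  | zero => omega
  | succ n => rfl

lemma getLast?_dB : ∀ {n a : ℕ}, 1 ≤ n → (dB a n).getLast? = some (a + 4*n - 4)
  | 0, _, h => by omega
  | 1, a, _ => by simp [dB]
  | n+2, a, _ => by
    have ih := getLast?_dB (n := n+1) (a := a+4) (by omega)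
    show ((a+3) :: (a+2) :: (a+1) :: a :: dB (a+4) (n+1)).getLast? = _
    rw [List.getLast?_cons_cons, List.getLast?_cons_cons, List.getLast?_cons_cons,
      show a :: dB (a+4) (n+1) = [a] ++ dB (a+4) (n+1) from rfl,
      List.getLast?_append_of_ne_nil _ (dB_ne_nil (by omega)), ih]
    congr 1; omega

lemma getLast?_range' {s n : ℕ} (h : 1 ≤ n) :
    (List.range' s n).getLast? = some (s + n - 1) := by
  obtain ⟨n, rfl⟩ : ∃ k, n = k + 1 := ⟨n - 1, by omega⟩
  rw [List.range'_1_concat, List.getLast?_append_of_ne_nil _ (by simp)]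
  simp

lemma chain'_range' {R : ℕ → ℕ → Prop} :
    ∀ {n s : ℕ}, (∀ i, s ≤ i → i + 1 < s + n → R i (i+1)) →
      List.Chain' R (List.range' s n)
  | 0, s, _ => by exact List.isChain_nil
  | n+1, s, h => by
    rw [List.range'_succ]
    refine List.isChain_cons.2 ⟨?_, chain'_range' (fun i h1 h2 => h i (by omega) (by omega))⟩
    intro y hy
    cases n with
    | zero => simp at hy
    | succ n => simp [List.range'_succ] at hy; subst hy; exact h s le_rfl (by omega)

/-- main chain lemma for descending blocks followed by a list -/
lemma dB_chain {m : ℕ} (hm : 2 ≤ m) :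
    ∀ (n a : ℕ) (l : List ℕ), a % 4 = 2 → 2 ≤ a → a + 4*n ≤ 4*m + 2 →
      List.Chain' (oE m) l → (∀ y ∈ l.head?, oE m (a + 4*n - 4) y) →
      List.Chain' (oE m) (dB a n ++ l) ∧
        (6 ≤ a → ∀ y ∈ (dB a n ++ l).head?, oE m (a - 4) y)
  | 0, a, l, ha4, ha2, hb, hl, hent => by
    refine ⟨hl, fun h6 y hy => ?_⟩
    have := hent y hy
    simpa using this
  | n+1, a, l, ha4, ha2, hb, hl, hent => by
    have hent' : ∀ y ∈ l.head?, oE m ((a+4) + 4*n - 4) y := by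
      intro y hy; have := hent y hy
      have e : a + 4*(n+1) - 4 = (a+4) + 4*n - 4 := by omega
      rwa [e] at this
    obtain ⟨hc, hent2⟩ := dB_chain hm n (a+4) l (by omega) (by omega) (by omega) hl hent'
    have hlink : ∀ y ∈ (dB (a+4) n ++ l).head?, oE m a y := by
      have := hent2 (by omega)
      intro y hy; simpa using this y hy
    constructor
    · show List.Chain' (oE m) ((a+3) :: (a+2) :: (a+1) :: a :: (dB (a+4) n ++ l))
      refine List.isChain_cons.2 ⟨?_, List.isChain_cons.2 ⟨?_,
        List.isChain_cons.2 ⟨?_, List.isChain_cons.2 ⟨hlink, hc⟩⟩⟩⟩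
      · intro y hy; simp at hy; subst hy
        exact edge_desc hm _ _ (by omega) (by omega) (by omega) (by omega)
      · intro y hy; simp at hy; subst hy
        exact edge_desc hm _ _ (by omega) (by omega) (by omega) (by omega)
      · intro y hy; simp at hy; subst hy
        exact edge_desc hm _ _ (by omega) (by omega) (by omega) (by omega)
    · intro h6 y hy
      rw [head?_dB_append _ (by omega)] at hy
      simp at hy; subst hy
      exact edge_jump hm _ _ (by omega) (by omega) (by omega) (by omega)

lemma range'_ne_nil {s n : ℕ} (h : 1 ≤ n) : List.range' s n ≠ [] := by
  intro he; have := congrArg List.length he; simp at this; omega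

lemma head?_range'_append {s n : ℕ} (l : List ℕ) (h : 1 ≤ n) :
    (List.range' s n ++ l).head? = some s := by
  cases n with
  | zero => omega
  | succ n => rw [List.range'_succ]; rfl

lemma head?_range' {s n : ℕ} (h : 1 ≤ n) : (List.range' s n).head? = some s := by
  cases n with
  | zero => omega
  | succ n => rw [List.range'_succ]; rfl

lemma nodup_range1 (s n : ℕ) : (List.range' s n).Nodup := List.nodup_range' (s := s) (n := n)

lemma case1 {m : ℕ} (hm : 2 ≤ m) :
    IsHamPathOn (fun x y => (x, y) ∈ oddEdges (2*m+1)) (Finset.Icc 1 (2*(2*m+1)-1))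
      1 (2*(2*m+1)-1) (List.range' 1 (4*m+1)) := by
  refine ⟨nodup_range1 _ _, ?_, ?_, ?_, ?_⟩
  · exact chain'_range' fun i h1 h2 => edge_asc hm i (i+1) (by omega) (by omega) rfl
  · rw [head?_range' (by omega)]
  · rw [getLast?_range' (by omega)]; simp only [Option.some.injEq]; omega
  · intro x; simp only [List.mem_range'_1, Finset.mem_Icc]; omega

lemma case2 {m t : ℕ} (hm : 2 ≤ m) (ht1 : 1 ≤ t) (htm : t ≤ m) :
    IsHamPathOn (fun x y => (x, y) ∈ oddEdges (2*m+1)) (Finset.Icc 1 (2*(2*m+1)-1))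
      (4*t+1) (4*t-3) (dB (4*t-2) (m+1-t) ++ List.range' 1 (4*t-3)) := by
  refine ⟨?_, ?_, ?_, ?_, ?_⟩
  · rw [List.nodup_append]
    refine ⟨nodup_dB, nodup_range1 _ _, ?_⟩
    intro x hx y hy
    rw [mem_dB] at hx; rw [List.mem_range'_1] at hy; omega
  · refine (dB_chain hm (m+1-t) (4*t-2) _ (by omega) (by omega) (by omega) ?_ ?_).1
    · exact chain'_range' fun i h1 h2 => edge_asc hm i (i+1) (by omega) (by omega) rfl
    · intro y hy
      rw [head?_range' (by omega)] at hy; simp at hy; subst hy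
      exact edge_to1 hm _ _ (by omega) rfl
  · rw [head?_dB_append _ (by omega)]; simp only [Option.some.injEq]; omega
  · rw [List.getLast?_append_of_ne_nil _ (range'_ne_nil (by omega)),
      getLast?_range' (by omega)]
    simp only [Option.some.injEq]; omega
  · intro x
    simp only [List.mem_append, mem_dB, List.mem_range'_1, Finset.mem_Icc]; omega

lemma case3 {m t : ℕ} (hm : 2 ≤ m) (ht1 : 1 ≤ t) (htm : t ≤ m - 1) :
    IsHamPathOn (fun x y => (x, y) ∈ oddEdges (2*m+1)) (Finset.Icc 1 (2*(2*m+1)-1))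
      (4*t-1) (4*t+3)
      (List.range' (4*t-1) 4 ++ (dB (4*t+6) (m-1-t) ++
        (List.range' 1 (4*t-3) ++ [4*t-2, 4*t+5, 4*t+4, 4*t+3]))) := by
  have hCD : List.Chain' (fun x y => (x, y) ∈ oddEdges (2*m+1))
      (List.range' 1 (4*t-3) ++ [4*t-2, 4*t+5, 4*t+4, 4*t+3]) := by
    refine List.isChain_append.2 ⟨?_, ?_, ?_⟩
    · exact chain'_range' fun i h1 h2 => edge_asc hm i (i+1) (by omega) (by omega) rfl
    · refine List.isChain_cons_cons.2 ⟨?_, List.isChain_cons_cons.2 ⟨?_, List.isChain_cons_cons.2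
        ⟨?_, List.isChain_singleton _⟩⟩⟩
      · exact edge_jump hm _ _ (by omega) (by omega) (by omega) (by omega)
      · exact edge_desc hm _ _ (by omega) (by omega) (by omega) (by omega)
      · exact edge_desc hm _ _ (by omega) (by omega) (by omega) (by omega)
    · intro x hx y hy
      rw [getLast?_range' (by omega)] at hx
      simp at hx hy; subst hx; subst hy
      exact edge_asc hm _ _ (by omega) (by omega) (by omega)
  obtain ⟨hB, hBent⟩ := dB_chain hm (m-1-t) (4*t+6)
    (List.range' 1 (4*t-3) ++ [4*t-2, 4*t+5, 4*t+4, 4*t+3])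
    (by omega) (by omega) (by omega) hCD (by
      intro y hy
      rw [head?_range'_append _ (by omega)] at hy; simp at hy; subst hy
      exact edge_to1 hm _ _ (by omega) rfl)
  refine ⟨?_, ?_, ?_, ?_, ?_⟩
  · rw [List.nodup_append, List.nodup_append, List.nodup_append]
    refine ⟨nodup_range1 _ _, ⟨nodup_dB, ⟨nodup_range1 _ _, ?_, ?_⟩, ?_⟩, ?_⟩
    · simp; omega
    · intro x hx y hy
      simp [List.mem_range'_1] at hx hy; omega
    · intro x hx y hy
      simp [mem_dB, List.mem_range'_1] at hx hy; omega
    · intro x hx y hy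
      simp [mem_dB, List.mem_range'_1] at hx hy; omega
  · refine List.isChain_append.2 ⟨?_, hB, ?_⟩
    · exact chain'_range' fun i h1 h2 => edge_asc hm i (i+1) (by omega) (by omega) rfl
    · intro x hx y hy
      rw [getLast?_range' (by omega)] at hx; simp at hx; subst hx
      have := hBent (by omega) y hy
      have e : 4*t+6-4 = 4*t+2 := by omega
      rw [e] at this
      rw [show (4*t-1+3 : ℕ) = 4*t+2 from by omega]
      exact this
  · rw [head?_range'_append _ (by omega)]
  · rw [List.getLast?_append_of_ne_nil _ (by simp),
      List.getLast?_append_of_ne_nil _ (by simp),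
      List.getLast?_append_of_ne_nil _ (by simp)]
    rfl
  · intro x
    simp [mem_dB, List.mem_range'_1]
    omega

lemma case4 {m : ℕ} (hm : 2 ≤ m) :
    IsHamPathOn (fun x y => (x, y) ∈ oddEdges (2*m+1)) (Finset.Icc 1 (2*(2*m+1)-1))
      (4*m-1) 3
      ([4*m-1, 4*m-2, 1, 2] ++ (dB 6 (m-2) ++ [4*m+1, 4*m, 5, 4, 3])) := by
  have hD : List.Chain' (fun x y => (x, y) ∈ oddEdges (2*m+1)) [4*m+1, 4*m, 5, 4, 3] := by
    refine List.isChain_cons_cons.2 ⟨?_, List.isChain_cons_cons.2 ⟨?_, List.isChain_cons_cons.2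
      ⟨?_, List.isChain_cons_cons.2 ⟨?_, List.isChain_singleton _⟩⟩⟩⟩
    · exact edge_desc hm _ _ (by omega) (by omega) (by omega) (by omega)
    · exact edge_to5 hm _ _ rfl rfl
    · exact edge_desc hm _ _ (by omega) (by omega) (by omega) (by omega)
    · exact edge_desc hm _ _ (by omega) (by omega) (by omega) (by omega)
  obtain ⟨hB, hBent⟩ := dB_chain hm (m-2) 6 [4*m+1, 4*m, 5, 4, 3]
    (by omega) (by omega) (by omega) hD (by
      intro y hy; simp at hy; subst hy
      exact edge_jump hm _ _ (by omega) (by omega) (by omega) (by omega))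
  refine ⟨?_, ?_, ?_, ?_, ?_⟩
  · rw [List.nodup_append, List.nodup_append]
    refine ⟨?_, ⟨nodup_dB, ?_, ?_⟩, ?_⟩
    · simp; omega
    · simp; omega
    · intro x hx y hy
      simp [mem_dB] at hx hy; omega
    · intro x hx y hy
      simp [mem_dB] at hx hy; omega
  · refine List.isChain_append.2 ⟨?_, hB, ?_⟩
    · refine List.isChain_cons_cons.2 ⟨?_, List.isChain_cons_cons.2 ⟨?_, List.isChain_cons_cons.2
        ⟨?_, List.isChain_singleton _⟩⟩⟩
      · exact edge_desc hm _ _ (by omega) (by omega) (by omega) (by omega)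
      · exact edge_to1 hm _ _ rfl rfl
      · exact edge_asc hm _ _ (by omega) (by omega) rfl
    · intro x hx y hy
      simp only [List.getLast?_cons_cons, List.getLast?_singleton, Option.mem_some_iff] at hx
      subst hx
      have := hBent (by omega) y hy
      have e : (6:ℕ)-4 = 2 := by omega
      rwa [e] at this
  · rfl
  · rw [List.getLast?_append_of_ne_nil _ (by simp),
      List.getLast?_append_of_ne_nil _ (by simp)]
    rfl
  · intro x
    simp [mem_dB]
    omega


/-- for odd `k ≥ 5` and every `j ∈ {1, …, k}`, there is a Hamiltonian path
in `S_k` from the incoming vertex `i_j = 2j - 1` to the outgoing vertex `o_j`. -/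
theorem oddSk_paired_hamPath (k : ℕ) (hk : 5 ≤ k) (hko : Odd k)
    (j : ℕ) (hj1 : 1 ≤ j) (hjk : j ≤ k) :
    ∃ p : List ℕ, IsHamPathOn (fun x y => (x, y) ∈ oddEdges k)
      (Finset.Icc 1 (2 * k - 1)) (2 * j - 1) (oddOut k j) p := by
  obtain ⟨m, rfl⟩ : ∃ m, k = 2*m+1 := by
    obtain ⟨r, hr⟩ := hko; exact ⟨r, by omega⟩
  have hm : 2 ≤ m := by omega
  rcases Nat.even_or_odd j with he | ho
  · obtain ⟨t, rfl⟩ : ∃ t, j = 2*t := by obtain ⟨t, ht⟩ := he; exact ⟨t, by omega⟩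
    rcases eq_or_lt_of_le (show t ≤ m by omega) with rfl | htm
    · have hout : oddOut (2*t+1) (2*t) = 3 := by
        simp only [oddOut, Nat.even_iff]; split_ifs <;> omega
      rw [hout, show 2*(2*t)-1 = 4*t-1 from by omega]
      exact ⟨_, case4 hm⟩
    · have hout : oddOut (2*m+1) (2*t) = 4*t+3 := by
        simp only [oddOut, Nat.even_iff]; split_ifs <;> omega
      rw [hout, show 2*(2*t)-1 = 4*t-1 from by omega]
      exact ⟨_, case3 hm (by omega) (by omega)⟩
  · obtain ⟨t, rfl⟩ := ho
    rcases Nat.eq_zero_or_pos t with rfl | ht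
    · have hout : oddOut (2*m+1) (2*0+1) = 2*(2*m+1)-1 := by
        simp only [oddOut, Nat.even_iff]; split_ifs <;> omega
      rw [hout, show 2*(2*0+1)-1 = 1 from by omega]
      exact ⟨_, case1 hm⟩
    · have hout : oddOut (2*m+1) (2*t+1) = 4*t-3 := by
        simp only [oddOut, Nat.even_iff]; split_ifs <;> omega
      rw [hout, show 2*(2*t+1)-1 = 4*t+1 from by omega]
      exact ⟨_, case2 hm ht (by omega)⟩
end

section
/- For every even integer k ≥ 4, the only Hamiltonian path in the digraph S_k starting at vertex 2k−1 is the path 2k−1, 2k−2, 1, 2, 3, …, 2k−3 (i.e., after 2k−1 and 2k−2 it visits the vertices 1 through 2k−3 in increasing order, ending at vertex 2k−3). -/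
/-- The directed edge set of the graph `S_k` for even `k ≥ 4`. -/
def evenEdges (k : ℕ) : Finset (ℕ × ℕ) :=
  ((Finset.Icc 1 ((k - 2) / 2)).biUnion fun i =>
      {(4*i-2, 4*i-1), (4*i-1, 4*i-2), (4*i-1, 4*i), (4*i, 4*i-1),
        (4*i, 4*i+1), (4*i+1, 4*i)}) ∪
  ((Finset.Icc 1 ((k - 4) / 2)).biUnion fun i => {(4*i-2, 4*i+5), (4*i+1, 4*i+2)}) ∪
  ({(1, 2), (2*k-6, 2*k-1), (2*k-3, 2*k-2), (2*k-2, 1), (2*k-2, 5),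
    (2*k-1, 2*k-2)} : Finset (ℕ × ℕ))

/-- The `m`-th outgoing vertex `o_m` (with `1 ≤ m ≤ k`) of `S_k` for even `k ≥ 4`:
`o_1 = 3`, `o_{k-2} = 2k-1`, `o_{k-1} = 2k-7`, `o_k = 2k-3`, and otherwise
`o_{2j} = 4j+3` and `o_{2j+1} = 4j-3`. -/
def evenOut (k m : ℕ) : ℕ :=
  if m = 1 then 3
  else if m = k - 2 then 2*k - 1
  else if m = k - 1 then 2*k - 7
  else if m = k then 2*k - 3
  else if Even m then 2*m + 3
  else 2*m - 5

lemma mem_evenEdges' (t x y : ℕ) :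
    ((x, y) ∈ evenEdges (2*t+4)) ↔
      (∃ i, 1 ≤ i ∧ i ≤ t+1 ∧
        ((x = 4*i-2 ∧ y = 4*i-1) ∨ (x = 4*i-1 ∧ y = 4*i-2) ∨ (x = 4*i-1 ∧ y = 4*i) ∨
         (x = 4*i ∧ y = 4*i-1) ∨ (x = 4*i ∧ y = 4*i+1) ∨ (x = 4*i+1 ∧ y = 4*i))) ∨
      (∃ i, 1 ≤ i ∧ i ≤ t ∧ ((x = 4*i-2 ∧ y = 4*i+5) ∨ (x = 4*i+1 ∧ y = 4*i+2))) ∨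
      (x = 1 ∧ y = 2) ∨ (x = 4*t+2 ∧ y = 4*t+7) ∨ (x = 4*t+5 ∧ y = 4*t+6) ∨
      (x = 4*t+6 ∧ y = 1) ∨ (x = 4*t+6 ∧ y = 5) ∨ (x = 4*t+7 ∧ y = 4*t+6) := by
  have e1 : (2*t+4-2)/2 = t+1 := by omega
  have e2 : (2*t+4-4)/2 = t := by omega
  have e3 : 2*(2*t+4)-6 = 4*t+2 := by omega
  have e4 : 2*(2*t+4)-1 = 4*t+7 := by omega
  have e5 : 2*(2*t+4)-3 = 4*t+5 := by omega
  have e6 : 2*(2*t+4)-2 = 4*t+6 := by omega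
  simp only [evenEdges, e1, e2, e3, e4, e5, e6, Finset.mem_union, Finset.mem_biUnion,
    Finset.mem_Icc, Finset.mem_insert, Finset.mem_singleton, Prod.mk.injEq]
  constructor
  · rintro ((⟨i,⟨h1,h2⟩,h⟩|⟨i,⟨h1,h2⟩,h⟩)|h)
    · exact Or.inl ⟨i, h1, h2, h⟩
    · exact Or.inr (Or.inl ⟨i, h1, h2, h⟩)
    · exact Or.inr (Or.inr h)
  · rintro (⟨i,h1,h2,h⟩|⟨i,h1,h2,h⟩|h)
    · exact Or.inl (Or.inl ⟨i, ⟨h1, h2⟩, h⟩)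
    · exact Or.inl (Or.inr ⟨i, ⟨h1, h2⟩, h⟩)
    · exact Or.inr h

lemma ee_out_top (t y : ℕ) (h : (4*t+7, y) ∈ evenEdges (2*t+4)) : y = 4*t+6 := by
  rw [mem_evenEdges'] at h
  rcases h with ⟨i,h1,h2,h3⟩|⟨i,h1,h2,h3⟩|h <;> omega

lemma ee_out_sec (t y : ℕ) (h : (4*t+6, y) ∈ evenEdges (2*t+4)) : y = 1 ∨ y = 5 := by
  rw [mem_evenEdges'] at h
  rcases h with ⟨i,h1,h2,h3⟩|⟨i,h1,h2,h3⟩|h <;> omega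

lemma ee_in_one (t x : ℕ) (h : (x, 1) ∈ evenEdges (2*t+4)) : x = 4*t+6 := by
  rw [mem_evenEdges'] at h
  rcases h with ⟨i,h1,h2,h3⟩|⟨i,h1,h2,h3⟩|h <;> omega

lemma ee_out_gen (t x y : ℕ) (h : (x, y) ∈ evenEdges (2*t+4)) (hx1 : 1 ≤ x)
    (hx2 : x ≤ 4*t+4) :
    y = x+1 ∨ (y+1 = x ∧ 2 ≤ x) ∨ (x % 4 = 2 ∧ y = x+7 ∧ x+2 ≤ 4*t) ∨
      (x = 4*t+2 ∧ y = 4*t+7) := by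
  rw [mem_evenEdges'] at h
  rcases h with ⟨i,h1,h2,h3⟩|⟨i,h1,h2,h3⟩|h <;> omega

lemma ee_in_a (t x y : ℕ) (h : (x, y) ∈ evenEdges (2*t+4)) (hy : y % 4 = 3)
    (hy2 : y ≤ 4*t+3) : x+1 = y ∨ x = y+1 := by
  rw [mem_evenEdges'] at h
  rcases h with ⟨i,h1,h2,h3⟩|⟨i,h1,h2,h3⟩|h <;> omega

lemma ee_out_a (t x y : ℕ) (h : (x, y) ∈ evenEdges (2*t+4)) (hx : x % 4 = 3)
    (hx2 : x ≤ 4*t+3) : y+1 = x ∨ y = x+1 := by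
  rw [mem_evenEdges'] at h
  rcases h with ⟨i,h1,h2,h3⟩|⟨i,h1,h2,h3⟩|h <;> omega

lemma ee_in_b (t x y : ℕ) (h : (x, y) ∈ evenEdges (2*t+4)) (hy : y % 4 = 0)
    (hy1 : 1 ≤ y) (hy2 : y ≤ 4*t+4) : x+1 = y ∨ x = y+1 := by
  rw [mem_evenEdges'] at h
  rcases h with ⟨i,h1,h2,h3⟩|⟨i,h1,h2,h3⟩|h <;> omega

lemma ee_in_c (t x y : ℕ) (h : (x, y) ∈ evenEdges (2*t+4)) (hy : y % 4 = 1)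
    (hy1 : 5 ≤ y) (hy2 : y ≤ 4*t+1) : x+1 = y ∨ x+7 = y ∨ (y = 5 ∧ x = 4*t+6) := by
  rw [mem_evenEdges'] at h
  rcases h with ⟨i,h1,h2,h3⟩|⟨i,h1,h2,h3⟩|h <;> omega

lemma ee_succ (t v : ℕ) (hv1 : 1 ≤ v) (hv2 : v ≤ 4*t+4) :
    (v, v+1) ∈ evenEdges (2*t+4) := by
  rw [mem_evenEdges']
  have h4 : v % 4 = 0 ∨ v % 4 = 1 ∨ v % 4 = 2 ∨ v % 4 = 3 := by omega
  rcases h4 with h | h | h | h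
  · exact Or.inl ⟨v/4, by omega, by omega, by omega⟩
  · rcases Nat.eq_or_lt_of_le hv1 with h1 | h1
    · exact Or.inr (Or.inr (Or.inl (by omega)))
    · exact Or.inr (Or.inl ⟨v/4, by omega, by omega, by omega⟩)
  · exact Or.inl ⟨(v+2)/4, by omega, by omega, by omega⟩
  · exact Or.inl ⟨(v+1)/4, by omega, by omega, by omega⟩

lemma ee_top (t : ℕ) : (4*t+7, 4*t+6) ∈ evenEdges (2*t+4) := by
  rw [mem_evenEdges']; omega

lemma ee_sec (t : ℕ) : (4*t+6, 1) ∈ evenEdges (2*t+4) := by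
  rw [mem_evenEdges']; omega

private def gfun (t m : ℕ) : ℕ := if m = 0 then 4*t+7 else if m = 1 then 4*t+6 else m - 1

private lemma gfun_cases (t m : ℕ) :
    (m = 0 ∧ gfun t m = 4*t+7) ∨ (m = 1 ∧ gfun t m = 4*t+6) ∨
      (2 ≤ m ∧ gfun t m = m - 1) := by
  unfold gfun; split_ifs <;> omega

private lemma uniqAux (t v : ℕ) (p : List ℕ)
    (hp : IsHamPathOn (fun x y => (x, y) ∈ evenEdges (2*t+4)) (Finset.Icc 1 (4*t+7))
      (4*t+7) v p) :
    p = (4*t+7) :: (4*t+6) :: List.range' 1 (4*t+5) := by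
  obtain ⟨hnd, hch, hhead, hlast, hmem⟩ := hp
  have hlen : p.length = 4*t+7 := by
    have h1 : p.toFinset = Finset.Icc 1 (4*t+7) := by
      ext x; rw [List.mem_toFinset]; exact hmem x
    have h2 := List.toFinset_card_of_nodup hnd
    rw [h1, Nat.card_Icc] at h2
    omega
  have hchain : ∀ i, i + 1 < p.length → (p.getD i 0, p.getD (i+1) 0) ∈ evenEdges (2*t+4) := by
    intro i h
    have hh := List.isChain_iff_getElem.mp hch i (by omega)
    rw [List.getD_eq_getElem p 0 (by omega), List.getD_eq_getElem p 0 h]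
    exact hh
  have hinj : ∀ i j, i < p.length → j < p.length → p.getD i 0 = p.getD j 0 → i = j := by
    intro i j hi hj h
    rw [List.getD_eq_getElem p 0 hi, List.getD_eq_getElem p 0 hj] at h
    exact (hnd.getElem_inj_iff).mp h
  have hpos : ∀ x, 1 ≤ x → x ≤ 4*t+7 → ∃ i, i < p.length ∧ p.getD i 0 = x := by
    intro x h1 h2
    have hx : x ∈ p := (hmem x).2 (Finset.mem_Icc.mpr ⟨h1, h2⟩)
    obtain ⟨i, hi, he⟩ := List.mem_iff_getElem.mp hx
    exact ⟨i, hi, by rw [List.getD_eq_getElem p 0 hi]; exact he⟩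
  have hvx : ∀ i, i < p.length → 1 ≤ p.getD i 0 ∧ p.getD i 0 ≤ 4*t+7 := by
    intro i hi
    have h1 : p.getD i 0 ∈ p := by
      rw [List.getD_eq_getElem p 0 hi]; exact List.getElem_mem _
    have := (hmem _).1 h1
    simpa [Finset.mem_Icc] using this
  have h0 : p.getD 0 0 = 4*t+7 := by
    rw [List.head?_eq_getElem?, List.getElem?_eq_getElem (show 0 < p.length by omega)] at hhead
    rw [List.getD_eq_getElem p 0 (by omega)]
    exact Option.some.inj hhead
  have key : ∀ m, m < p.length → p.getD m 0 = gfun t m := by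
    intro m
    induction m using Nat.strong_induction_on with
    | _ m IH =>
      rcases m with _ | (_ | (_ | i))
      · intro _; simpa [gfun] using h0
      · intro hm
        have hE := hchain 0 (by omega)
        rw [h0] at hE
        have := ee_out_top t _ hE
        simpa [gfun] using this
      · intro hm
        have h1 : p.getD 1 0 = 4*t+6 := by
          have := IH 1 (by omega) (by omega)
          rcases gfun_cases t 1 with h|h|h <;> omega
        have hE := hchain 1 (by omega)
        rw [show (1:ℕ)+1 = 2 from by norm_num] at hE
        rw [h1] at hE
        have h2 := ee_out_sec t _ hE
        have hg : gfun t 2 = 1 := by simp [gfun]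
        rw [hg]
        rcases h2 with h2 | h2
        · exact h2
        · exfalso
          obtain ⟨j, hj, hj1⟩ := hpos 1 (by omega) (by omega)
          have hj0 : j ≠ 0 := by intro h; rw [h, h0] at hj1; omega
          have hE2 := hchain (j-1) (by omega)
          rw [show j - 1 + 1 = j from by omega, hj1] at hE2
          have h3 := ee_in_one t _ hE2
          rw [← h1] at h3
          have hj2 : j - 1 = 1 := hinj _ _ (by omega) (by omega) h3
          rw [show j = 2 from by omega] at hj1
          omega
      · intro hm
        rw [show i+1+1+1 = i+3 from by omega] at hm ⊢
        have hv : p.getD (i+2) 0 = i+1 := by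
          have := IH (i+2) (by omega) (by omega)
          rcases gfun_cases t (i+2) with h|h|h <;> omega
        have hg : gfun t (i+3) = i+2 := by
          rcases gfun_cases t (i+3) with h|h|h <;> omega
        rw [hg]
        have hE := hchain (i+2) (by omega)
        rw [show i+2+1 = i+3 from by omega] at hE
        rw [hv] at hE
        have hc := ee_out_gen t _ _ hE (by omega) (by omega)
        rcases hc with hc | ⟨hc, hc2⟩ | ⟨hm4, hy, hle⟩ | ⟨hc, hc2⟩
        · omega
        · exfalso
          have hp1 : p.getD (i+1) 0 = i := by
            have := IH (i+1) (by omega) (by omega)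
            rcases gfun_cases t (i+1) with h|h|h <;> omega
          have := hinj (i+3) (i+1) (by omega) (by omega) (by omega)
          omega
        · -- trap case
          exfalso
          obtain ⟨ia, hia, ha⟩ := hpos (i+2) (by omega) (by omega)
          obtain ⟨ib, hib, hb⟩ := hpos (i+3) (by omega) (by omega)
          obtain ⟨ic, hic, hcc⟩ := hpos (i+4) (by omega) (by omega)
          have hband : ∀ jx, jx < p.length → i+2 ≤ p.getD jx 0 → p.getD jx 0 ≤ i+4 →
              i+4 ≤ jx := by
            intro jx hjx hv1 hv2
            by_contra hcon
            push_neg at hcon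
            rcases Nat.lt_or_ge jx (i+3) with hlt | hge
            · have := IH jx (by omega) (by omega)
              rcases gfun_cases t jx with h|h|h <;> omega
            · rw [show jx = i+3 from by omega] at hv2
              omega
          have hia4 : i+4 ≤ ia := hband ia hia (by omega) (by omega)
          have hib4 : i+4 ≤ ib := hband ib hib (by omega) (by omega)
          have hic4 : i+4 ≤ ic := hband ic hic (by omega) (by omega)
          -- predecessor of a = i+2
          have h1 := hchain (ia-1) (by omega)
          rw [show ia - 1 + 1 = ia from by omega, ha] at h1
          have h2 := ee_in_a t _ _ h1 (by omega) (by omega)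
          have hpa : p.getD (ia-1) 0 = i+3 := by
            rcases h2 with h2 | h2
            · exfalso
              have := hinj (ia-1) (i+2) (by omega) (by omega) (by omega)
              omega
            · omega
          have hiba : ia - 1 = ib := hinj (ia-1) ib (by omega) hib (by omega)
          -- a is the last vertex
          have hialast : ia = 4*t+6 := by
            by_contra hcon
            have h3 := hchain ia (by omega)
            rw [ha] at h3
            have h4 := ee_out_a t _ _ h3 (by omega) (by omega)
            rcases h4 with h4 | h4
            · have := hinj (ia+1) (i+2) (by omega) (by omega) (by omega)
              omega
            · have := hinj (ia+1) ib (by omega) hib (by omega)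
              omega
          -- predecessor of b = i+3
          have h5 := hchain (ib-1) (by omega)
          rw [show ib - 1 + 1 = ib from by omega, hb] at h5
          have h6 := ee_in_b t _ _ h5 (by omega) (by omega) (by omega)
          have hpb : p.getD (ib-1) 0 = i+4 := by
            rcases h6 with h6 | h6
            · exfalso
              have := hinj (ib-1) ia (by omega) hia (by omega)
              omega
            · omega
          have hicb : ib - 1 = ic := hinj (ib-1) ic (by omega) hic (by omega)
          -- predecessor of c = i+4
          have h7 := hchain (ic-1) (by omega)
          rw [show ic - 1 + 1 = ic from by omega, hcc] at h7
          have h8 := ee_in_c t _ _ h7 (by omega) (by omega) (by omega)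
          rcases h8 with h8 | h8 | ⟨h8, h9⟩
          · have := hinj (ic-1) ib (by omega) hib (by omega)
            omega
          · have hval := hvx (ic-1) (by omega)
            have hp' : p.getD (i-2) 0 = i-3 := by
              have := IH (i-2) (by omega) (by omega)
              rcases gfun_cases t (i-2) with h|h|h <;> omega
            have := hinj (ic-1) (i-2) (by omega) (by omega) (by omega)
            omega
          · have hp1 : p.getD 1 0 = 4*t+6 := by
              have := IH 1 (by omega) (by omega)
              rcases gfun_cases t 1 with h|h|h <;> omega
            have := hinj (ic-1) 1 (by omega) (by omega) (by omega)
            omega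
        · exfalso
          have := hinj (i+3) 0 (by omega) (by omega) (by omega)
          omega
  -- now conclude p equals the explicit list
  have hlen2 : ((4*t+7) :: (4*t+6) :: List.range' 1 (4*t+5)).length = 4*t+7 := by
    simp [List.length_range']
  apply List.ext_getElem (by omega)
  intro n h1 h2
  have hk := key n (by omega)
  rw [List.getD_eq_getElem p 0 h1] at hk
  rw [hk]
  rcases n with _ | (_ | n)
  · simp [gfun]
  · simp [gfun]
  · rw [List.getElem_cons_succ, List.getElem_cons_succ, List.getElem_range']
    rcases gfun_cases t (n+1+1) with h|h|h <;> omega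

private lemma existAux (t : ℕ) :
    IsHamPathOn (fun x y => (x, y) ∈ evenEdges (2*t+4)) (Finset.Icc 1 (4*t+7))
      (4*t+7) (4*t+5) ((4*t+7) :: (4*t+6) :: List.range' 1 (4*t+5)) := by
  refine ⟨?_, ?_, ?_, ?_, ?_⟩
  · simp only [List.nodup_cons, List.mem_cons, List.mem_range'_1]
    refine ⟨by omega, by omega, List.nodup_range' (s := 1) (n := 4*t+5)⟩
  · refine List.isChain_iff_getElem.mpr ?_
    intro i h
    simp only [List.length_cons, List.length_range'] at h
    rcases i with _ | (_ | i)
    · simpa using ee_top t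
    · simp only [List.getElem_cons_succ, List.getElem_cons_zero, List.getElem_range']
      simpa using ee_sec t
    · simp only [List.getElem_cons_succ, List.getElem_range']
      rw [show 1 + 1*i = i+1 from by omega, show 1 + 1*(i+1) = (i+1)+1 from by omega]
      exact ee_succ t (i+1) (by omega) (by omega)
  · rfl
  · rw [List.getLast?_eq_getElem?]
    have hl : ((4*t+7) :: (4*t+6) :: List.range' 1 (4*t+5)).length = 4*t+7 := by
      simp [List.length_range']
    rw [hl, show 4*t+7-1 = (4*t+4)+1+1 from by omega,
      List.getElem?_eq_getElem (by rw [hl]; omega)]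
    rw [List.getElem_cons_succ, List.getElem_cons_succ, List.getElem_range']
    congr 1
    omega
  · intro x
    simp only [List.mem_cons, List.mem_range'_1, Finset.mem_Icc]
    omega

/-- for even `k ≥ 4`, the only Hamiltonian path in `S_k` starting at
vertex `2k - 1` is `2k-1, 2k-2, 1, 2, 3, …, 2k-3`. -/
theorem evenSk_unique_hamPath_from_last (k : ℕ) (hk : 4 ≤ k) (hke : Even k) :
    IsHamPathOn (fun x y => (x, y) ∈ evenEdges k) (Finset.Icc 1 (2 * k - 1))
      (2 * k - 1) (2 * k - 3)
      ((2 * k - 1) :: (2 * k - 2) :: List.range' 1 (2 * k - 3)) ∧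
    ∀ (v : ℕ) (p : List ℕ),
      IsHamPathOn (fun x y => (x, y) ∈ evenEdges k) (Finset.Icc 1 (2 * k - 1))
        (2 * k - 1) v p →
      p = (2 * k - 1) :: (2 * k - 2) :: List.range' 1 (2 * k - 3) := by
  obtain ⟨c, hc⟩ := hke
  obtain ⟨t, rfl⟩ : ∃ t, k = 2*t+4 := ⟨c - 2, by omega⟩
  have e1 : 2*(2*t+4)-1 = 4*t+7 := by omega
  have e2 : 2*(2*t+4)-2 = 4*t+6 := by omega
  have e3 : 2*(2*t+4)-3 = 4*t+5 := by omega
  rw [e1, e2, e3]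
  exact ⟨existAux t, fun v p hp => uniqAux t v p hp⟩
end
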